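/- Let n ≥ 2 be an integer, c ≥ 1 a real number, and x_1, …, x_n positive real numbers. Then Σ_{i=1}^n x_i + c·Σ_{1 ≤ i < j ≤ n} min(x_i, x_j) ≤ ( c − 2(c−1)/(n+1) ) · ( Σ_{i=1}^n x_i + Σ_{1 ≤ i < j ≤ n} min(x_i, x_j) ). -/
import Mathlib


open Finset

lemma pair_sum_aux (n : ℕ) (x : Fin n → ℝ) :
    ∑ p ∈ Finset.univ.filter (fun p : Fin n × Fin n => p.1 < p.2), (x p.1 + x p.2)
      = ((n : ℝ) - 1) * ∑ i, x i := by
  classical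
  have hswap : ∑ p ∈ Finset.univ.filter (fun p : Fin n × Fin n => p.1 < p.2), (x p.1 + x p.2)
      = ∑ p ∈ Finset.univ.filter (fun p : Fin n × Fin n => p.2 < p.1), (x p.1 + x p.2) := by
    apply Finset.sum_nbij' (fun p => Prod.swap p) (fun p => Prod.swap p) <;>
      simp [add_comm]
  have hsplit : ∑ p ∈ Finset.univ.filter (fun p : Fin n × Fin n => p.1 ≠ p.2), (x p.1 + x p.2)
      = 2 * ∑ p ∈ Finset.univ.filter (fun p : Fin n × Fin n => p.1 < p.2), (x p.1 + x p.2) := by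
    have : (Finset.univ.filter (fun p : Fin n × Fin n => p.1 ≠ p.2))
        = (Finset.univ.filter (fun p : Fin n × Fin n => p.1 < p.2)) ∪
          (Finset.univ.filter (fun p : Fin n × Fin n => p.2 < p.1)) := by
      ext p
      simp only [Finset.mem_filter, Finset.mem_union, Finset.mem_univ, true_and]
      exact ne_iff_lt_or_gt
    rw [this, Finset.sum_union]
    · rw [← hswap]; ring
    · rw [Finset.disjoint_filter]
      intro p _ h1 h2
      exact absurd h1 (not_lt.mpr h2.le)
  have huniv : ∑ p ∈ (Finset.univ : Finset (Fin n × Fin n)), (x p.1 + x p.2)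
      = 2 * (n : ℝ) * ∑ i, x i := by
    rw [← Finset.univ_product_univ, Finset.sum_product]
    simp only [Finset.sum_add_distrib, Finset.sum_const, Finset.card_univ,
      Fintype.card_fin, nsmul_eq_mul]
    rw [← Finset.mul_sum]
    ring
  have hdiag : ∑ p ∈ Finset.univ.filter (fun p : Fin n × Fin n => p.1 = p.2), (x p.1 + x p.2)
      = 2 * ∑ i, x i := by
    rw [Finset.sum_filter]
    rw [← Finset.univ_product_univ, Finset.sum_product]
    simp [Finset.sum_ite_eq, two_mul, Finset.sum_add_distrib]
  have hfull : ∑ p ∈ (Finset.univ : Finset (Fin n × Fin n)), (x p.1 + x p.2)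
      = (∑ p ∈ Finset.univ.filter (fun p : Fin n × Fin n => p.1 = p.2), (x p.1 + x p.2))
        + ∑ p ∈ Finset.univ.filter (fun p : Fin n × Fin n => p.1 ≠ p.2), (x p.1 + x p.2) := by
    rw [← Finset.sum_filter_add_sum_filter_not Finset.univ (fun p : Fin n × Fin n => p.1 = p.2)]
  rw [huniv, hdiag, hsplit] at hfull
  linarith

theorem stmt_10 (n : ℕ) (hn : 2 ≤ n) (c : ℝ) (hc : 1 ≤ c)
    (x : Fin n → ℝ) (hx : ∀ i, 0 < x i) :
    (∑ i, x i) + c * ∑ p ∈ Finset.univ.filter (fun p : Fin n × Fin n => p.1 < p.2),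
        min (x p.1) (x p.2)
      ≤ (c - 2 * (c - 1) / ((n : ℝ) + 1)) *
          ((∑ i, x i) + ∑ p ∈ Finset.univ.filter (fun p : Fin n × Fin n => p.1 < p.2),
            min (x p.1) (x p.2)) := by
  set S := ∑ i, x i with hS
  set M := ∑ p ∈ Finset.univ.filter (fun p : Fin n × Fin n => p.1 < p.2),
      min (x p.1) (x p.2) with hM
  have h2M : 2 * M ≤ ((n : ℝ) - 1) * S := by
    have := pair_sum_aux n x
    have hle : M ≤ (∑ p ∈ Finset.univ.filter (fun p : Fin n × Fin n => p.1 < p.2),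
        (x p.1 + x p.2)) / 2 := by
      rw [Finset.sum_div]
      apply Finset.sum_le_sum
      intro p _
      rcases min_le_iff.mpr (Or.inl (le_refl (x p.1))) with _
      cases le_total (x p.1) (x p.2) with
      | inl h => rw [min_eq_left h]; linarith
      | inr h => rw [min_eq_right h]; linarith
    rw [this] at hle
    linarith
  have hMnn : 0 ≤ M := by
    apply Finset.sum_nonneg
    intro p _
    exact le_min (hx p.1).le (hx p.2).le
  have hSnn : 0 ≤ S := Finset.sum_nonneg fun i _ => (hx i).le
  have hd : (0 : ℝ) < (n : ℝ) + 1 := by positivity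
  have key : 2 * (c - 1) / ((n : ℝ) + 1) * (S + M) ≤ (c - 1) * S := by
    rw [div_mul_eq_mul_div, div_le_iff₀ hd]
    nlinarith
  have hexp : (c - 2 * (c - 1) / ((n : ℝ) + 1)) * (S + M)
      = c * (S + M) - 2 * (c - 1) / ((n : ℝ) + 1) * (S + M) := by ring
  rw [hexp]
  linarith
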